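/- Let k ∈ ℕ with k ≥ 2 and let t > 0. Then for every r > 0, the derivative with respect to r of the function r ↦ r^{2k−1}·F_k(r,0,t) equals (t²/2)·r·(r^{2k−3}·F_{k−1}(r,0,t)); equivalently, (1/r)·(d/dr)[r^{2k−1} F_k(r,0,t)] = (t²/2)·r^{2k−3} F_{k−1}(r,0,t). -/

import Mathlib

open Real Set Topology

namespace Stmt10Aux

/-- The base function `x ↦ cos (t √x)`. -/
noncomputable def G (t : ℝ) : ℝ → ℝ := fun x => Real.cos (t * Real.sqrt x)

/-- Its iterated derivatives. -/
noncomputable def Gd (t : ℝ) (k : ℕ) : ℝ → ℝ := iteratedDeriv k (G t)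

lemma contDiffOn_G (t : ℝ) (n : ℕ) : ContDiffOn ℝ n (G t) (Ioi 0) := by
  intro x hx
  have hsq : ContDiffAt ℝ n Real.sqrt x := Real.contDiffAt_sqrt (ne_of_gt hx)
  exact ((Real.contDiff_cos.contDiffAt).comp x ((contDiffAt_const (c := t)).mul hsq)).contDiffWithinAt

lemma iteratedDerivWithin_Ioi (t : ℝ) (k : ℕ) {y : ℝ} (hy : y ∈ Ioi (0:ℝ)) :
    iteratedDerivWithin k (G t) (Ioi 0) y = Gd t k y := by
  rw [iteratedDerivWithin_eq_iteratedFDerivWithin, Gd, iteratedDeriv,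
    iteratedFDerivWithin_of_isOpen k isOpen_Ioi hy]

lemma hasDerivAt_Gd (t : ℝ) (k : ℕ) {x : ℝ} (hx : 0 < x) :
    HasDerivAt (Gd t k) (Gd t (k + 1) x) x := by
  have hmem : Ioi (0:ℝ) ∈ 𝓝 x := isOpen_Ioi.mem_nhds hx
  have hu : UniqueDiffOn ℝ (Ioi (0:ℝ)) := isOpen_Ioi.uniqueDiffOn
  have hd : DifferentiableWithinAt ℝ (iteratedDerivWithin k (G t) (Ioi 0)) (Ioi 0) x := by
    refine (contDiffOn_G t (k + 1)).differentiableOn_iteratedDerivWithin ?_ hu x hx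
    exact_mod_cast Nat.lt_succ_self k
  have hd2 : DifferentiableAt ℝ (iteratedDerivWithin k (G t) (Ioi 0)) x :=
    hd.differentiableAt hmem
  have hder : HasDerivAt (iteratedDerivWithin k (G t) (Ioi 0)) (Gd t (k + 1) x) x := by
    have h1 := hd2.hasDerivAt
    have h2 : deriv (iteratedDerivWithin k (G t) (Ioi 0)) x = Gd t (k + 1) x := by
      rw [← iteratedDerivWithin_Ioi t (k+1) hx, iteratedDerivWithin_succ,
        derivWithin_of_isOpen isOpen_Ioi hx]
    rwa [h2] at h1
  refine hder.congr_of_eventuallyEq ?_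
  filter_upwards [hmem] with y hy
  exact (iteratedDerivWithin_Ioi t k hy).symm

/-- explicit first derivative -/
noncomputable def phi (t : ℝ) : ℝ → ℝ :=
  fun x => -Real.sin (t * Real.sqrt x) * (t * (2 * Real.sqrt x)⁻¹)

lemma hasDerivAt_G (t : ℝ) {x : ℝ} (hx : 0 < x) :
    HasDerivAt (G t) (phi t x) x := by
  have hs : HasDerivAt Real.sqrt (1 / (2 * Real.sqrt x)) x := Real.hasDerivAt_sqrt hx.ne'
  have h1 : HasDerivAt (fun y => t * Real.sqrt y) (t * (1 / (2 * Real.sqrt x))) x := hs.const_mul t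
  have h2 := h1.cos
  show HasDerivAt (fun x => Real.cos (t * Real.sqrt x)) (phi t x) x
  convert h2 using 1
  unfold phi
  ring

lemma gd1_eq (t : ℝ) {x : ℝ} (hx : 0 < x) : Gd t 1 x = phi t x := by
  rw [Gd, iteratedDeriv_one]
  exact (hasDerivAt_G t hx).deriv

lemma hasDerivAt_phi (t : ℝ) {x : ℝ} (hx : 0 < x) :
    HasDerivAt (phi t)
      (-(Real.cos (t * Real.sqrt x) * (t * (1 / (2 * Real.sqrt x)))) * (t * (2 * Real.sqrt x)⁻¹)
        + -Real.sin (t * Real.sqrt x) *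
          (t * (-(2 * (1 / (2 * Real.sqrt x))) / (2 * Real.sqrt x) ^ 2))) x := by
  have hsx : 0 < Real.sqrt x := Real.sqrt_pos.mpr hx
  have hs : HasDerivAt Real.sqrt (1 / (2 * Real.sqrt x)) x := Real.hasDerivAt_sqrt hx.ne'
  have h1 : HasDerivAt (fun y => t * Real.sqrt y) (t * (1 / (2 * Real.sqrt x))) x := hs.const_mul t
  have hu : HasDerivAt (fun y => -Real.sin (t * Real.sqrt y))
      (-(Real.cos (t * Real.sqrt x) * (t * (1 / (2 * Real.sqrt x))))) x := h1.sin.neg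
  have hv0 : HasDerivAt (fun y => 2 * Real.sqrt y) (2 * (1 / (2 * Real.sqrt x))) x := hs.const_mul 2
  have hv1 : HasDerivAt (fun y => (2 * Real.sqrt y)⁻¹)
      (-(2 * (1 / (2 * Real.sqrt x))) / (2 * Real.sqrt x) ^ 2) x :=
    hv0.inv (by positivity)
  have hv : HasDerivAt (fun y => t * (2 * Real.sqrt y)⁻¹)
      (t * (-(2 * (1 / (2 * Real.sqrt x))) / (2 * Real.sqrt x) ^ 2)) x := hv1.const_mul t
  exact hu.mul hv

lemma ode0 (t : ℝ) {x : ℝ} (hx : 0 < x) :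
    x * Gd t 2 x + (1 / 2) * Gd t 1 x + (t ^ 2 / 4) * Gd t 0 x = 0 := by
  have hmem : Ioi (0:ℝ) ∈ 𝓝 x := isOpen_Ioi.mem_nhds hx
  have h1 : HasDerivAt (Gd t 1) (Gd t 2 x) x := hasDerivAt_Gd t 1 hx
  have h2 : HasDerivAt (Gd t 1)
      (-(Real.cos (t * Real.sqrt x) * (t * (1 / (2 * Real.sqrt x)))) * (t * (2 * Real.sqrt x)⁻¹)
        + -Real.sin (t * Real.sqrt x) *
          (t * (-(2 * (1 / (2 * Real.sqrt x))) / (2 * Real.sqrt x) ^ 2))) x := by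
    refine (hasDerivAt_phi t hx).congr_of_eventuallyEq ?_
    filter_upwards [hmem] with y hy
    exact gd1_eq t hy
  have h3 := h1.unique h2
  have h0 : Gd t 0 x = Real.cos (t * Real.sqrt x) := by rw [Gd, iteratedDeriv_zero]; rfl
  rw [h3, h0, gd1_eq t hx]
  have hsx : 0 < Real.sqrt x := Real.sqrt_pos.mpr hx
  have hs2 : Real.sqrt x ^ 2 = x := Real.sq_sqrt hx.le
  unfold phi
  set s := Real.sqrt x with hsdef
  rw [← hs2]
  field_simp
  ring

lemma ode (t : ℝ) (k : ℕ) : ∀ x > (0:ℝ),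
    x * Gd t (k + 2) x + ((k : ℝ) + 1 / 2) * Gd t (k + 1) x + (t ^ 2 / 4) * Gd t k x = 0 := by
  induction k with
  | zero =>
    intro x hx
    simpa using ode0 t hx
  | succ n ih =>
    intro x hx
    have hmem : Ioi (0:ℝ) ∈ 𝓝 x := isOpen_Ioi.mem_nhds hx
    have hψ : HasDerivAt
        (fun y => y * Gd t (n + 2) y + ((n : ℝ) + 1 / 2) * Gd t (n + 1) y + (t ^ 2 / 4) * Gd t n y)
        (1 * Gd t (n + 2) x + x * Gd t (n + 3) x + ((n : ℝ) + 1 / 2) * Gd t (n + 2) x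
          + (t ^ 2 / 4) * Gd t (n + 1) x) x := by
      exact (((hasDerivAt_id x).mul (hasDerivAt_Gd t (n + 2) hx)).add
        ((hasDerivAt_Gd t (n + 1) hx).const_mul _)).add ((hasDerivAt_Gd t n hx).const_mul _)
    have hzero : HasDerivAt
        (fun y => y * Gd t (n + 2) y + ((n : ℝ) + 1 / 2) * Gd t (n + 1) y + (t ^ 2 / 4) * Gd t n y)
        0 x := by
      refine (hasDerivAt_const x (0:ℝ)).congr_of_eventuallyEq ?_
      filter_upwards [hmem] with y hy
      exact ih y hy
    have h := hψ.unique hzero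
    have e1 : n + 1 + 2 = n + 3 := by ring
    have e2 : n + 1 + 1 = n + 2 := by ring
    rw [e1, e2]
    push_cast
    linarith [h]

lemma shift_eq (t : ℝ) (k : ℕ) (s : ℝ) :
    iteratedDeriv k (fun c : ℝ => Real.cos (t * Real.sqrt (s - c))) 0
      = (-1 : ℝ) ^ k * Gd t k s := by
  have h : (fun c : ℝ => Real.cos (t * Real.sqrt (s - c)))
      = fun c : ℝ => (fun z : ℝ => G t (s + z)) (-c) := by
    funext c
    simp [G, sub_eq_add_neg]
  rw [h, iteratedDeriv_comp_neg k (fun z : ℝ => G t (s + z)) 0,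
    iteratedDeriv_comp_const_add k (G t) s]
  simp [Gd, smul_eq_mul]

end Stmt10Aux

open Stmt10Aux in
/-- For `k ≥ 2` and `r > 0`, the derivative in `r` of `r ↦ r^{2k−1}·F_k(r,0,t)`
equals `(t²/2)·r·(r^{2k−3}·F_{k−1}(r,0,t))`, where `F_k(r,0,t)` is the `k`-th
derivative at `c = 0` of `c ↦ cos(t·√(r²−c))`. -/
theorem stmt_10 (k : ℕ) (hk : 2 ≤ k) (t : ℝ) (ht : 0 < t) (r : ℝ) (hr : 0 < r) :
    HasDerivAt
      (fun r' : ℝ =>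
        r' ^ (2 * k - 1) *
          iteratedDeriv k (fun c : ℝ => Real.cos (t * Real.sqrt (r' ^ 2 - c))) 0)
      ((t ^ 2 / 2) * r *
        (r ^ (2 * k - 3) *
          iteratedDeriv (k - 1) (fun c : ℝ => Real.cos (t * Real.sqrt (r ^ 2 - c))) 0))
      r := by
  obtain ⟨m, rfl⟩ : ∃ m, k = m + 2 := ⟨k - 2, by omega⟩
  have hx : (0:ℝ) < r ^ 2 := by positivity
  have e1 : 2 * (m + 2) - 1 = 2 * m + 3 := by omega
  have e2 : 2 * (m + 2) - 3 = 2 * m + 1 := by omega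
  have e3 : m + 2 - 1 = m + 1 := by omega
  simp only [e1, e2, e3, shift_eq]
  -- derivative of the product
  have h1 : HasDerivAt (fun r' : ℝ => r' ^ (2 * m + 3))
      ((2 * m + 3 : ℕ) * r ^ (2 * m + 2)) r := by
    have := hasDerivAt_pow (2 * m + 3) (x := r)
    rwa [show 2 * m + 3 - 1 = 2 * m + 2 by omega] at this
  have h2 : HasDerivAt (fun r' : ℝ => (-1 : ℝ) ^ (m + 2) * Gd t (m + 2) (r' ^ 2))
      ((-1 : ℝ) ^ (m + 2) * (Gd t (m + 3) (r ^ 2) * (2 * r))) r := by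
    have hcomp : HasDerivAt (fun r' : ℝ => Gd t (m + 2) (r' ^ 2))
        (Gd t (m + 3) (r ^ 2) * (2 * r)) r := by
      have hp : HasDerivAt (fun r' : ℝ => r' ^ 2) (2 * r) r := by
        simpa using hasDerivAt_pow 2 r
      exact HasDerivAt.comp r (hasDerivAt_Gd t (m + 2) hx) hp
    exact hcomp.const_mul _
  have hmain : HasDerivAt (fun r' : ℝ => r' ^ (2 * m + 3) * ((-1 : ℝ) ^ (m + 2) * Gd t (m + 2) (r' ^ 2))) _ r :=
    h1.mul h2
  convert hmain using 1
  -- value identity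
  have hode := ode t (m + 1) (r ^ 2) hx
  have e4 : m + 1 + 2 = m + 3 := by ring
  have e5 : m + 1 + 1 = m + 2 := by ring
  rw [e4, e5] at hode
  push_cast at hode ⊢
  linear_combination (2 * (-1 : ℝ) ^ (m + 1) * r ^ (2 * m + 2)) * hode
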